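/- Let k be an upper bound on the sizes of the members of 𝓑, and let E' ⊆ 𝓑 × 𝓑 be the arc set of a Hamiltonian (directed) cycle in the body graph D_𝓑. Then Φ_{E'} represents h_𝓑 and, for every measure * ∈ {B, BA, TA, C, BC, L}, |Φ_{E'}|_* ≤ k · OPT_*(𝓑). -/
import Mathlib


open Finset

variable {V : Type*} [Fintype V] [DecidableEq V]

/-- A pure Horn CNF is a finite set of clauses `(B, v)`: body `B`, head `v`,
with `B` nonempty and `v ∉ B`. -/
def PureHorn (Φ : Finset (Finset V × V)) : Prop :=
  ∀ c ∈ Φ, c.1.Nonempty ∧ c.2 ∉ c.1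

/-- A set `W` is closed under the clauses of `Φ`. -/
def HornClosed (Φ : Finset (Finset V × V)) (W : Set V) : Prop :=
  ∀ c ∈ Φ, ↑c.1 ⊆ W → c.2 ∈ W

/-- Forward-chaining closure `F_Φ(Z)`: the smallest set containing `Z`
that is closed under the clauses of `Φ`. -/
def hornClosure (Φ : Finset (Finset V × V)) (Z : Set V) : Set V :=
  ⋂₀ {W : Set V | Z ⊆ W ∧ HornClosed Φ W}

/-- `Ψ_𝓑 = ⋀_{B ∈ 𝓑} B → (V \ B)`. -/
def keyCNF (𝓑 : Finset (Finset V)) : Finset (Finset V × V) :=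
  𝓑.biUnion fun B => (Finset.univ \ B).image fun v => (B, v)

/-- `Φ` represents the key Horn function `h_𝓑`, i.e. `Φ` is a pure Horn CNF
equivalent to `Ψ_𝓑`. -/
def Represents (𝓑 : Finset (Finset V)) (Φ : Finset (Finset V × V)) : Prop :=
  PureHorn Φ ∧ ∀ Z : Finset V, hornClosure Φ ↑Z = hornClosure (keyCNF 𝓑) ↑Z

/-- (B) number of (distinct) bodies. -/
def sizeB (Φ : Finset (Finset V × V)) : ℕ := (Φ.image Prod.fst).card
/-- (BA) body area `Σ_i |B_i|` over the distinct bodies. -/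
def sizeBA (Φ : Finset (Finset V × V)) : ℕ := ∑ B ∈ Φ.image Prod.fst, B.card
/-- (C) number of clauses `Σ_i |H_i|`. -/
def sizeC (Φ : Finset (Finset V × V)) : ℕ := Φ.card
/-- (TA) total area `Σ_i (|B_i| + |H_i|)`. -/
def sizeTA (Φ : Finset (Finset V × V)) : ℕ := sizeBA Φ + sizeC Φ
/-- (BC) bodies plus clauses `Σ_i (|H_i| + 1)`. -/
def sizeBC (Φ : Finset (Finset V × V)) : ℕ := sizeB Φ + sizeC Φ
/-- (L) number of literals `Σ_i (|B_i| + 1)·|H_i|`. -/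
def sizeL (Φ : Finset (Finset V × V)) : ℕ := ∑ c ∈ Φ, (c.1.card + 1)

/-- `μ` is one of the six size measures. -/
def IsMeasure (μ : Finset (Finset V × V) → ℕ) : Prop :=
  μ = sizeB ∨ μ = sizeBA ∨ μ = sizeTA ∨ μ = sizeC ∨ μ = sizeBC ∨ μ = sizeL

/-- `OPT_μ(𝓑)`: minimum `μ`-size of a CNF representing `h_𝓑`. -/
noncomputable def OPT (μ : Finset (Finset V × V) → ℕ) (𝓑 : Finset (Finset V)) : ℕ :=
  sInf {s : ℕ | ∃ Φ : Finset (Finset V × V), Represents 𝓑 Φ ∧ μ Φ = s}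

/-- `price_μ(S,T)`: minimum `μ`-size of a pure Horn CNF with bodies in `𝓑`
whose forward chaining from `S` reaches all of `T`. -/
noncomputable def price (μ : Finset (Finset V × V) → ℕ) (𝓑 : Finset (Finset V))
    (S T : Finset V) : ℕ :=
  sInf {s : ℕ | ∃ Φ : Finset (Finset V × V),
    PureHorn Φ ∧ (∀ c ∈ Φ, c.1 ∈ 𝓑) ∧ ↑T ⊆ hornClosure Φ ↑S ∧ μ Φ = s}

set_option linter.unusedSectionVars false

section Aux

lemma subset_hornClosure (Φ : Finset (Finset V × V)) (Z : Set V) :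
    Z ⊆ hornClosure Φ Z := by
  intro v hv
  rw [hornClosure, Set.mem_sInter]
  exact fun W hW => hW.1 hv

lemma hornClosed_hornClosure (Φ : Finset (Finset V × V)) (Z : Set V) :
    HornClosed Φ (hornClosure Φ Z) := by
  intro c hc hsub
  rw [hornClosure, Set.mem_sInter]
  intro W hW
  exact hW.2 c hc fun x hx => (hsub hx) W hW

lemma hornClosure_subset (Φ : Finset (Finset V × V)) {Z W : Set V}
    (hZ : Z ⊆ W) (hW : HornClosed Φ W) : hornClosure Φ Z ⊆ W :=
  Set.sInter_subset_of_mem ⟨hZ, hW⟩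

lemma mem_keyCNF {𝓑 : Finset (Finset V)} {c : Finset V × V} :
    c ∈ keyCNF 𝓑 ↔ c.1 ∈ 𝓑 ∧ c.2 ∉ c.1 := by
  constructor
  · intro h
    simp only [keyCNF, mem_biUnion, mem_image] at h
    obtain ⟨B, hB, v, hv, rfl⟩ := h
    exact ⟨hB, (mem_sdiff.mp hv).2⟩
  · rintro ⟨h1, h2⟩
    simp only [keyCNF, mem_biUnion, mem_image]
    exact ⟨c.1, h1, c.2, mem_sdiff.mpr ⟨mem_univ _, h2⟩, rfl⟩

lemma cycle_closed_univ (𝓑 : Finset (Finset V)) (nxt : Finset V → Finset V)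
    (hcover : ∀ v : V, ∃ B ∈ 𝓑, v ∈ B)
    (hmem : ∀ B ∈ 𝓑, nxt B ∈ 𝓑)
    (hham : ∀ B ∈ 𝓑, ∀ B' ∈ 𝓑, ∃ j : ℕ, nxt^[j] B = B')
    {W : Set V}
    (hW : HornClosed (𝓑.biUnion fun B => (nxt B \ B).image fun v => (B, v)) W)
    {B : Finset V} (hB : B ∈ 𝓑) (hBW : ↑B ⊆ W) : W = Set.univ := by
  have hmemΦ : ∀ B₀ ∈ 𝓑, ∀ v ∈ nxt B₀ \ B₀,
      ((B₀, v) : Finset V × V) ∈ 𝓑.biUnion fun B => (nxt B \ B).image fun v => (B, v) := by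
    intro B₀ h₀ v hv
    simp only [mem_biUnion, mem_image]
    exact ⟨B₀, h₀, v, hv, rfl⟩
  have step : ∀ B₀ ∈ 𝓑, (↑B₀ : Set V) ⊆ W → (↑(nxt B₀) : Set V) ⊆ W := by
    intro B₀ h₀ hsub v hv
    by_cases hvB : v ∈ B₀
    · exact hsub (Finset.mem_coe.mpr hvB)
    · exact hW (B₀, v) (hmemΦ B₀ h₀ v (mem_sdiff.mpr ⟨Finset.mem_coe.mp hv, hvB⟩)) hsub
  have iter : ∀ j : ℕ, nxt^[j] B ∈ 𝓑 ∧ (↑(nxt^[j] B) : Set V) ⊆ W := by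
    intro j
    induction j with
    | zero => exact ⟨hB, hBW⟩
    | succ n ih =>
      rw [Function.iterate_succ_apply']
      exact ⟨hmem _ ih.1, step _ ih.1 ih.2⟩
  ext v
  simp only [Set.mem_univ, iff_true]
  obtain ⟨B', hB', hv⟩ := hcover v
  obtain ⟨j, hj⟩ := hham B hB B' hB'
  have h2 := (iter j).2
  rw [hj] at h2
  exact h2 (Finset.mem_coe.mpr hv)

lemma represents_cycleCNF (𝓑 : Finset (Finset V)) (nxt : Finset V → Finset V)
    (hne : ∀ B ∈ 𝓑, B.Nonempty)
    (hcover : ∀ v : V, ∃ B ∈ 𝓑, v ∈ B)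
    (hmem : ∀ B ∈ 𝓑, nxt B ∈ 𝓑)
    (hham : ∀ B ∈ 𝓑, ∀ B' ∈ 𝓑, ∃ j : ℕ, nxt^[j] B = B') :
    Represents 𝓑 (𝓑.biUnion fun B => (nxt B \ B).image fun v => (B, v)) := by
  set Φ := 𝓑.biUnion fun B => (nxt B \ B).image fun v => (B, v) with hΦdef
  have hmemΦ : ∀ c ∈ Φ, c.1 ∈ 𝓑 ∧ c.2 ∈ nxt c.1 \ c.1 := by
    intro c hc
    simp only [hΦdef, mem_biUnion, mem_image] at hc
    obtain ⟨B, hB, v, hv, rfl⟩ := hc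
    exact ⟨hB, hv⟩
  constructor
  · intro c hc
    obtain ⟨h1, h2⟩ := hmemΦ c hc
    exact ⟨hne _ h1, (mem_sdiff.mp h2).2⟩
  · intro Z
    apply subset_antisymm
    · apply hornClosure_subset
      · exact subset_hornClosure _ _
      · intro c hc hsub
        obtain ⟨h1, h2⟩ := hmemΦ c hc
        exact hornClosed_hornClosure (keyCNF 𝓑) _ c
          (mem_keyCNF.mpr ⟨h1, (mem_sdiff.mp h2).2⟩) hsub
    · apply hornClosure_subset
      · exact subset_hornClosure _ _
      · intro c hc hsub
        have h1 := (mem_keyCNF.mp hc).1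
        have huniv := cycle_closed_univ 𝓑 nxt hcover hmem hham
          (hornClosed_hornClosure Φ ↑Z) h1 hsub
        rw [huniv]
        trivial

lemma exists_body_clause (𝓑 : Finset (Finset V))
    (hproper : ∀ B ∈ 𝓑, B ≠ Finset.univ)
    (hsperner : ∀ B ∈ 𝓑, ∀ B' ∈ 𝓑, B ⊆ B' → B = B')
    {Ψ : Finset (Finset V × V)} (hΨ : Represents 𝓑 Ψ)
    {B : Finset V} (hB : B ∈ 𝓑) : ∃ v, (B, v) ∈ Ψ := by
  by_contra hcon
  push_neg at hcon
  have hclosed : HornClosed Ψ ↑B := by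
    intro c hc hcs
    exfalso
    have hc1 : c.1 ⊆ B := Finset.coe_subset.mp hcs
    by_cases hex : ∃ B'' ∈ 𝓑, B'' ⊆ c.1
    · obtain ⟨B'', hB'', hsub⟩ := hex
      have hBB : B'' = B := hsperner B'' hB'' B hB (hsub.trans hc1)
      have hc1B : c.1 = B := le_antisymm hc1 (hBB ▸ hsub)
      apply hcon c.2
      rw [← hc1B, Prod.mk.eta]
      exact hc
    · push_neg at hex
      have hkey : hornClosure (keyCNF 𝓑) ↑c.1 = ↑c.1 := by
        apply subset_antisymm
        · apply hornClosure_subset _ subset_rfl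
          intro c' hc' hcs'
          exact absurd (Finset.coe_subset.mp hcs') (hex c'.1 (mem_keyCNF.mp hc').1)
        · exact subset_hornClosure _ _
      have hΨc : hornClosure Ψ ↑c.1 = ↑c.1 := (hΨ.2 c.1).trans hkey
      have hv : c.2 ∈ hornClosure Ψ ↑c.1 :=
        hornClosed_hornClosure Ψ _ c hc (subset_hornClosure _ _)
      rw [hΨc] at hv
      exact (hΨ.1 c hc).2 (Finset.mem_coe.mp hv)
  have h1 : hornClosure Ψ ↑B = ↑B :=
    subset_antisymm (hornClosure_subset Ψ subset_rfl hclosed) (subset_hornClosure _ _)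
  have hkeyuniv : hornClosure (keyCNF 𝓑) ↑B = Set.univ := by
    ext v
    simp only [Set.mem_univ, iff_true]
    by_cases hv : v ∈ B
    · exact subset_hornClosure _ _ (Finset.mem_coe.mpr hv)
    · exact hornClosed_hornClosure _ _ (B, v) (mem_keyCNF.mpr ⟨hB, hv⟩)
        (subset_hornClosure _ _)
  have hBu : (↑B : Set V) = Set.univ := by rw [← h1, hΨ.2 B, hkeyuniv]
  exact hproper B hB (Finset.coe_injective (by rw [hBu, Finset.coe_univ]))

end Aux

/-- If `E'` is the arc set of a Hamiltonian directed cycle in the body graph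
(encoded by a successor map `nxt` acting on `𝓑` as a single full cycle), then
`Φ_{E'} = ⋀_{B ∈ 𝓑} B → (nxt B \ B)` represents `h_𝓑` and is a
`k`-approximation for every one of the six measures, `k` bounding the body
sizes. -/
theorem stmt4 {V : Type*} [Fintype V] [DecidableEq V]
    (𝓑 : Finset (Finset V))
    (hne : ∀ B ∈ 𝓑, B.Nonempty) (hproper : ∀ B ∈ 𝓑, B ≠ Finset.univ)
    (hsperner : ∀ B ∈ 𝓑, ∀ B' ∈ 𝓑, B ⊆ B' → B = B')
    (hcover : ∀ v : V, ∃ B ∈ 𝓑, v ∈ B)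
    (hinter : ∀ v : V, ∃ B ∈ 𝓑, v ∉ B)
    (k : ℕ) (hk : ∀ B ∈ 𝓑, B.card ≤ k)
    (nxt : Finset V → Finset V)
    (hmem : ∀ B ∈ 𝓑, nxt B ∈ 𝓑)
    (hinj : ∀ B ∈ 𝓑, ∀ B' ∈ 𝓑, nxt B = nxt B' → B = B')
    (hham : ∀ B ∈ 𝓑, ∀ B' ∈ 𝓑, ∃ j : ℕ, nxt^[j] B = B')
    (Φ : Finset (Finset V × V))
    (hΦ : Φ = 𝓑.biUnion fun B => (nxt B \ B).image fun v => (B, v))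
    (μ : Finset (Finset V × V) → ℕ) (hμ : IsMeasure μ) :
    Represents 𝓑 Φ ∧ μ Φ ≤ k * OPT μ 𝓑 := by
  constructor
  · rw [hΦ]
    exact represents_cycleCNF 𝓑 nxt hne hcover hmem hham
  rcases 𝓑.eq_empty_or_nonempty with h𝓑 | h𝓑
  · subst h𝓑
    have hΦe : Φ = ∅ := by simp [hΦ]
    rcases hμ with rfl | rfl | rfl | rfl | rfl | rfl <;>
      simp [hΦe, sizeB, sizeBA, sizeTA, sizeC, sizeBC, sizeL]
  · obtain ⟨B₀, hB₀⟩ := h𝓑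
    have hVne : Nonempty V := ⟨(hne B₀ hB₀).choose⟩
    have hk1 : 1 ≤ k := le_trans (Finset.card_pos.mpr (hne B₀ hB₀)) (hk B₀ hB₀)
    have hOPTmem : ∃ Ψ, Represents 𝓑 Ψ ∧ μ Ψ = OPT μ 𝓑 := by
      have hsetne : {s : ℕ | ∃ Φ' : Finset (Finset V × V), Represents 𝓑 Φ' ∧ μ Φ' = s}.Nonempty :=
        ⟨μ (keyCNF 𝓑), keyCNF 𝓑,
          ⟨fun c hc => ⟨hne c.1 (mem_keyCNF.mp hc).1, (mem_keyCNF.mp hc).2⟩, fun Z => rfl⟩, rfl⟩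
      exact Nat.sInf_mem hsetne
    obtain ⟨Ψ, hΨrep, hΨopt⟩ := hOPTmem
    rw [← hΨopt]
    set m := 𝓑.card with hm
    set S := ∑ B ∈ 𝓑, B.card with hS
    have hmemΦ : ∀ c ∈ Φ, c.1 ∈ 𝓑 ∧ c.2 ∈ nxt c.1 \ c.1 := by
      intro c hc
      rw [hΦ] at hc
      simp only [mem_biUnion, mem_image] at hc
      obtain ⟨B, hB, v, hv, rfl⟩ := hc
      exact ⟨hB, hv⟩
    have hΦfst : Φ.image Prod.fst ⊆ 𝓑 := by
      intro b hb
      obtain ⟨c, hc, rfl⟩ := mem_image.mp hb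
      exact (hmemΦ c hc).1
    -- clauses of Ψ with prescribed bodies
    have hvex : ∀ B ∈ 𝓑, ∃ w, (B, w) ∈ Ψ :=
      fun B hB => exists_body_clause 𝓑 hproper hsperner hΨrep hB
    choose! vf hvf using hvex
    have hTsub : 𝓑.image (fun B => (B, vf B)) ⊆ Ψ := by
      intro c hc
      obtain ⟨B, hB, rfl⟩ := mem_image.mp hc
      exact hvf B hB
    have hBsub : 𝓑 ⊆ Ψ.image Prod.fst := by
      intro B hB
      exact mem_image.mpr ⟨(B, vf B), hvf B hB, rfl⟩
    -- lower bounds for Ψ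
    have LB_B : m ≤ sizeB Ψ := Finset.card_le_card hBsub
    have LB_BA : S ≤ sizeBA Ψ := Finset.sum_le_sum_of_subset hBsub
    have LB_C : m ≤ sizeC Ψ := le_trans (Finset.card_le_card hBsub) Finset.card_image_le
    have LB_L : S + m ≤ sizeL Ψ := by
      have h1 : ∑ c ∈ 𝓑.image (fun B => (B, vf B)), (c.1.card + 1)
          = ∑ B ∈ 𝓑, (B.card + 1) :=
        Finset.sum_image (fun x _ y _ h => congrArg Prod.fst h)
      calc S + m = ∑ B ∈ 𝓑, (B.card + 1) := by
            rw [Finset.sum_add_distrib, Finset.sum_const, smul_eq_mul, mul_one]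
        _ = ∑ c ∈ 𝓑.image (fun B => (B, vf B)), (c.1.card + 1) := h1.symm
        _ ≤ sizeL Ψ := Finset.sum_le_sum_of_subset hTsub
    -- upper bounds for Φ
    have UB_B : sizeB Φ ≤ m := Finset.card_le_card hΦfst
    have UB_BA : sizeBA Φ ≤ S := Finset.sum_le_sum_of_subset hΦfst
    have hcardk : ∀ B ∈ 𝓑, ((nxt B \ B).image fun v => (B, v)).card ≤ k := by
      intro B hB
      calc ((nxt B \ B).image fun v => (B, v)).card
          ≤ (nxt B \ B).card := Finset.card_image_le
        _ ≤ (nxt B).card := Finset.card_le_card sdiff_subset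
        _ ≤ k := hk _ (hmem B hB)
    have UB_C : sizeC Φ ≤ m * k := by
      calc sizeC Φ = Φ.card := rfl
        _ ≤ ∑ B ∈ 𝓑, ((nxt B \ B).image fun v => (B, v)).card := by
            rw [hΦ]; exact Finset.card_biUnion_le
        _ ≤ ∑ _B ∈ 𝓑, k := Finset.sum_le_sum hcardk
        _ = m * k := by rw [Finset.sum_const, smul_eq_mul]
    have hpd : (↑𝓑 : Set (Finset V)).PairwiseDisjoint
        (fun B => (nxt B \ B).image fun v => (B, v)) := by
      intro B hB B' hB' hne'
      simp only [Function.onFun]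
      rw [Finset.disjoint_left]
      intro c hc hc'
      obtain ⟨v, _, rfl⟩ := mem_image.mp hc
      obtain ⟨w, _, heq⟩ := mem_image.mp hc'
      exact hne' (congrArg Prod.fst heq).symm
    have UB_L : sizeL Φ ≤ k * (S + m) := by
      have heq : sizeL Φ = ∑ B ∈ 𝓑, (nxt B \ B).card * (B.card + 1) := by
        rw [sizeL, hΦ, Finset.sum_biUnion hpd]
        refine Finset.sum_congr rfl fun B hB => ?_
        rw [Finset.sum_image (fun x _ y _ h => congrArg Prod.snd h)]
        simp [mul_comm]
      calc sizeL Φ = ∑ B ∈ 𝓑, (nxt B \ B).card * (B.card + 1) := heq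
        _ ≤ ∑ B ∈ 𝓑, k * (B.card + 1) := Finset.sum_le_sum fun B hB =>
            Nat.mul_le_mul_right _
              (le_trans (Finset.card_le_card sdiff_subset) (hk _ (hmem B hB)))
        _ = k * (S + m) := by
            rw [← Finset.mul_sum, Finset.sum_add_distrib, Finset.sum_const,
              smul_eq_mul, mul_one]
    rcases hμ with rfl | rfl | rfl | rfl | rfl | rfl
    · calc sizeB Φ ≤ m := UB_B
        _ ≤ sizeB Ψ := LB_B
        _ = 1 * sizeB Ψ := (one_mul _).symm
        _ ≤ k * sizeB Ψ := Nat.mul_le_mul hk1 le_rfl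
    · calc sizeBA Φ ≤ S := UB_BA
        _ ≤ sizeBA Ψ := LB_BA
        _ = 1 * sizeBA Ψ := (one_mul _).symm
        _ ≤ k * sizeBA Ψ := Nat.mul_le_mul hk1 le_rfl
    · calc sizeTA Φ = sizeBA Φ + sizeC Φ := rfl
        _ ≤ S + m * k := add_le_add UB_BA UB_C
        _ ≤ k * S + k * m := add_le_add
            (le_trans (by rw [one_mul]) (Nat.mul_le_mul hk1 (le_refl S)))
            (le_of_eq (mul_comm m k))
        _ = k * (S + m) := (mul_add k S m).symm
        _ ≤ k * (sizeBA Ψ + sizeC Ψ) := Nat.mul_le_mul le_rfl (add_le_add LB_BA LB_C)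
        _ = k * sizeTA Ψ := rfl
    · calc sizeC Φ ≤ m * k := UB_C
        _ = k * m := mul_comm m k
        _ ≤ k * sizeC Ψ := Nat.mul_le_mul le_rfl LB_C
    · calc sizeBC Φ = sizeB Φ + sizeC Φ := rfl
        _ ≤ m + m * k := add_le_add UB_B UB_C
        _ ≤ k * m + k * m := add_le_add
            (le_trans (by rw [one_mul]) (Nat.mul_le_mul hk1 (le_refl m)))
            (le_of_eq (mul_comm m k))
        _ = k * (m + m) := (mul_add k m m).symm
        _ ≤ k * (sizeB Ψ + sizeC Ψ) := Nat.mul_le_mul le_rfl (add_le_add LB_B LB_C)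
        _ = k * sizeBC Ψ := rfl
    · calc sizeL Φ ≤ k * (S + m) := UB_L
        _ ≤ k * sizeL Ψ := Nat.mul_le_mul le_rfl LB_L
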